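/- Let C be a row-stochastic matrix whose rows are pairwise distinct, and suppose some column of C has at least two zero entries and at least one nonzero entry. Then rank_psd(C) ≥ 3; equivalently, C has no qubit implementation. -/

import Mathlib

open Matrix BigOperators
open scoped ComplexOrder

def RowStochastic {a b : ℕ} (M : Matrix (Fin a) (Fin b) ℝ) : Prop :=
  (∀ i j, 0 ≤ M i j) ∧ ∀ i, ∑ j, M i j = 1

noncomputable def psdRank {n m : ℕ} (C : Matrix (Fin n) (Fin m) ℝ) : ℕ :=
  sInf {k : ℕ | ∃ (A : Fin n → Matrix (Fin k) (Fin k) ℂ) (B : Fin m → Matrix (Fin k) (Fin k) ℂ),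
    (∀ i, (A i).PosSemidef) ∧ (∀ j, (B j).PosSemidef) ∧
    ∀ i j, (C i j : ℂ) = (A i * B j).trace}

lemma trace_conjTranspose_mul_self_eq_zero' {k : ℕ} (M : Matrix (Fin k) (Fin k) ℂ)
    (h : (Mᴴ * M).trace = 0) : M = 0 := by
  have h1 : (Mᴴ * M).trace = ((∑ i, ∑ l, Complex.normSq (M l i) : ℝ) : ℂ) := by
    simp [Matrix.trace, Matrix.mul_apply, Matrix.diag, Matrix.conjTranspose_apply,
      Complex.normSq_eq_conj_mul_self]
  rw [h1] at h
  have h2 : ∑ i, ∑ l, Complex.normSq (M l i) = 0 := by exact_mod_cast h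
  ext a b
  have hb := (Finset.sum_eq_zero_iff_of_nonneg (fun i _ => Finset.sum_nonneg
    (fun l _ => Complex.normSq_nonneg _))).mp h2 b (Finset.mem_univ _)
  have ha := (Finset.sum_eq_zero_iff_of_nonneg (fun l _ => Complex.normSq_nonneg _)).mp hb a
    (Finset.mem_univ _)
  simpa using Complex.normSq_eq_zero.mp ha

lemma psd_mul_eq_zero {k : ℕ} {A B : Matrix (Fin k) (Fin k) ℂ}
    (hA : A.PosSemidef) (hB : B.PosSemidef) (h : (A * B).trace = 0) : A * B = 0 := by
  obtain ⟨S, hSh, h1⟩ : ∃ S : Matrix (Fin k) (Fin k) ℂ, Sᴴ = S ∧ S * S = A :=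
    by
    open scoped MatrixOrder in
    obtain ⟨X, hX, -, hXX⟩ := CFC.exists_sqrt_of_isSelfAdjoint_of_quasispectrumRestricts hA.1.isSelfAdjoint
      (QuasispectrumRestricts.nnreal_of_nonneg hA.nonneg)
    exact ⟨X, hX, by simpa using hXX⟩
  obtain ⟨T, hTh, h2⟩ : ∃ T : Matrix (Fin k) (Fin k) ℂ, Tᴴ = T ∧ T * T = B :=
    by
    open scoped MatrixOrder in
    obtain ⟨X, hX, -, hXX⟩ := CFC.exists_sqrt_of_isSelfAdjoint_of_quasispectrumRestricts hB.1.isSelfAdjoint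
      (QuasispectrumRestricts.nnreal_of_nonneg hB.nonneg)
    exact ⟨X, hX, by simpa using hXX⟩
  subst h1 h2
  have htr : ((T * S)ᴴ * (T * S)).trace = 0 := by
    calc ((T * S)ᴴ * (T * S)).trace = (S * (T * T * S)).trace := by
          rw [conjTranspose_mul, hSh, hTh]; simp only [Matrix.mul_assoc]
    _ = ((T * T * S) * S).trace := Matrix.trace_mul_comm _ _
    _ = ((T * T) * (S * S)).trace := by simp only [Matrix.mul_assoc]
    _ = ((S * S) * (T * T)).trace := Matrix.trace_mul_comm _ _
    _ = 0 := h
  have hTS : T * S = 0 := trace_conjTranspose_mul_self_eq_zero' _ htr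
  calc S * S * (T * T) = S * (S * T) * T := by simp only [Matrix.mul_assoc]
  _ = S * (T * S)ᴴ * T := by rw [conjTranspose_mul, hSh, hTh]
  _ = 0 := by rw [hTS]; simp

lemma herm_struct (v : Fin 2 → ℂ) (hv : v ≠ 0) :
    ∃ (M : Matrix (Fin 2) (Fin 2) ℂ) (e : Fin 2),
      ∀ B : Matrix (Fin 2) (Fin 2) ℂ, B.IsHermitian → B *ᵥ v = 0 → B = B e e • M := by
  by_cases hv1 : v 1 = 0
  · have hv0 : v 0 ≠ 0 := by
      intro hv0
      exact hv (funext fun i => by fin_cases i <;> assumption)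
    refine ⟨!![0, 0; 0, 1], 1, fun B hB hBv => ?_⟩
    have e0 := congrFun hBv 0
    have e1 := congrFun hBv 1
    simp [Matrix.mulVec, dotProduct, Fin.sum_univ_two, hv1] at e0 e1
    have hB00 : B 0 0 = 0 := e0.resolve_right hv0
    have hB10 : B 1 0 = 0 := e1.resolve_right hv0
    have hB01 : B 0 1 = 0 := by
      rw [← hB.apply 0 1, hB10, star_zero]
    ext i j
    fin_cases i <;> fin_cases j <;>
      simp [hB00, hB01, hB10]
  · refine ⟨!![1, -(v 0)/(v 1); -(star (v 0))/(star (v 1)),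
      (v 0 * star (v 0))/(v 1 * star (v 1))], 0, fun B hB hBv => ?_⟩
    have e0 := congrFun hBv 0
    have e1 := congrFun hBv 1
    simp [Matrix.mulVec, dotProduct, Fin.sum_univ_two] at e0 e1
    have hsv1 : star (v 1) ≠ 0 := star_ne_zero.mpr hv1
    have h01 : B 0 1 = B 0 0 * (-(v 0)/(v 1)) := by
      field_simp
      linear_combination e0
    have h10 : B 1 0 = B 0 0 * (-(star (v 0))/(star (v 1))) := by
      rw [← hB.apply 1 0, h01]
      simp only [star_mul', star_div₀, star_neg, hB.apply 0 0]
    have h10' : B 1 0 * star (v 1) = -(B 0 0 * star (v 0)) := by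
      rw [h10, mul_div_assoc', div_mul_eq_mul_div, div_eq_iff hsv1]
      ring
    have hmul : B 1 1 * (v 1 * star (v 1)) = B 0 0 * (v 0 * star (v 0)) := by
      linear_combination star (v 1) * e1 - v 0 * h10'
    have h11 : B 1 1 = B 0 0 * ((v 0 * star (v 0))/(v 1 * star (v 1))) := by
      rw [← mul_div_assoc, eq_div_iff (mul_ne_zero hv1 hsv1)]
      linear_combination hmul
    ext i j
    fin_cases i <;> fin_cases j <;>
      simp [h01, h10, h11]

lemma herm_ratio {A A' : Matrix (Fin 2) (Fin 2) ℂ} (hA : A.IsHermitian) (hA' : A'.IsHermitian)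
    (hAne : A ≠ 0) {v : Fin 2 → ℂ} (hv : v ≠ 0) (h1 : A *ᵥ v = 0) (h2 : A' *ᵥ v = 0) :
    ∃ c : ℝ, A' = (c : ℂ) • A := by
  obtain ⟨M, e, hM⟩ := herm_struct v hv
  have hAe := hM A hA h1
  have hA'e := hM A' hA' h2
  have hAee : A e e ≠ 0 := fun h0 => hAne (by rw [hAe, h0, zero_smul])
  have hAr : A e e = ((A e e).re : ℂ) := (Complex.conj_eq_iff_re.mp (hA.apply e e)).symm
  have hA'r : A' e e = ((A' e e).re : ℂ) := (Complex.conj_eq_iff_re.mp (hA'.apply e e)).symm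
  have hre : (A e e).re ≠ 0 := by
    intro h
    apply hAee
    rw [hAr, h, Complex.ofReal_zero]
  refine ⟨(A' e e).re / (A e e).re, ?_⟩
  have key : A' e e = (((A' e e).re / (A e e).re : ℝ) : ℂ) * A e e := by
    rw [hA'r]
    nth_rewrite 2 [hAr]
    push_cast
    field_simp
    simp
  calc A' = A' e e • M := hA'e
  _ = ((((A' e e).re / (A e e).re : ℝ) : ℂ) * A e e) • M := by rw [← key]
  _ = (((A' e e).re / (A e e).re : ℝ) : ℂ) • (A e e • M) := by rw [← smul_smul]
  _ = _ := by rw [← hAe]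

/-- If all rows of a communication matrix C are distinct and some column has at
least two zeros and a nonzero entry, then rank_psd(C) ≥ 3. -/
theorem psdRank_ge_three {n m : ℕ} (C : Matrix (Fin n) (Fin m) ℝ)
    (hC : RowStochastic C) (hrows : ∀ i i' : Fin n, i ≠ i' → C i ≠ C i')
    (hcol : ∃ j : Fin m, (∃ i i' : Fin n, i ≠ i' ∧ C i j = 0 ∧ C i' j = 0) ∧
      ∃ i'' : Fin n, C i'' j ≠ 0) :
    3 ≤ psdRank C := by
  obtain ⟨j, ⟨i1, i2, hne, hz1, hz2⟩, i3, hnz⟩ := hcol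
  by_contra hlt
  push_neg at hlt
  -- the defining set is nonempty (take k = m with diagonal matrices)
  have hmem : m ∈ {k : ℕ | ∃ (A : Fin n → Matrix (Fin k) (Fin k) ℂ)
      (B : Fin m → Matrix (Fin k) (Fin k) ℂ),
      (∀ i, (A i).PosSemidef) ∧ (∀ j, (B j).PosSemidef) ∧
      ∀ i j, (C i j : ℂ) = (A i * B j).trace} := by
    refine ⟨fun i => Matrix.diagonal (fun l => (C i l : ℂ)),
      fun j' => Matrix.diagonal (fun l => if l = j' then 1 else 0),
      fun i => Matrix.PosSemidef.diagonal (fun l => Complex.zero_le_real.mpr (hC.1 i l)),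
      fun j' => Matrix.PosSemidef.diagonal (fun l => by positivity),
      fun i j' => ?_⟩
    rw [Matrix.diagonal_mul_diagonal, Matrix.trace_diagonal]
    simp [mul_ite, Finset.sum_ite_eq']
  obtain ⟨K, hKlt, A, B, hApsd, hBpsd, hfact⟩ :
      ∃ K, K < 3 ∧ ∃ (A : Fin n → Matrix (Fin K) (Fin K) ℂ)
        (B : Fin m → Matrix (Fin K) (Fin K) ℂ),
        (∀ i, (A i).PosSemidef) ∧ (∀ j, (B j).PosSemidef) ∧
        ∀ i j, (C i j : ℂ) = (A i * B j).trace :=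
    ⟨psdRank C, hlt, Nat.sInf_mem ⟨m, hmem⟩⟩
  -- every matrix A i is nonzero, since row sums are 1
  have hAne : ∀ i, A i ≠ 0 := by
    intro i h0
    have hrow : ∀ j', C i j' = 0 := by
      intro j'
      have := hfact i j'
      rw [h0] at this
      simp only [Matrix.zero_mul, Matrix.trace_zero] at this
      exact_mod_cast this
    have hs := hC.2 i
    rw [Finset.sum_eq_zero (fun j' _ => hrow j')] at hs
    norm_num at hs
  interval_cases K
  · -- K = 0
    have := hfact i3 j
    rw [Matrix.trace_eq_zero_of_isEmpty] at this
    exact hnz (by exact_mod_cast this)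
  · -- K = 1
    have hb : (B j) 0 0 ≠ 0 := by
      intro h0
      apply hnz
      have := hfact i3 j
      rw [Matrix.trace_fin_one, Matrix.mul_apply, Fin.sum_univ_one, h0, mul_zero] at this
      exact_mod_cast this
    have ha : A i1 0 0 = 0 := by
      have := hfact i1 j
      rw [Matrix.trace_fin_one, Matrix.mul_apply, Fin.sum_univ_one, hz1] at this
      rcases mul_eq_zero.mp this.symm with h | h
      · exact h
      · exact absurd h hb
    apply hAne i1
    ext a b
    fin_cases a; fin_cases b
    -- A i1 is 1×1; its only entry is 0... but ha is only entry (0,0)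
    exact ha
  · -- K = 2
    have hBj : B j ≠ 0 := by
      intro h0
      apply hnz
      have := hfact i3 j
      rw [h0, Matrix.mul_zero, Matrix.trace_zero] at this
      exact_mod_cast this
    have htr1 : (A i1 * B j).trace = 0 := by
      rw [← hfact i1 j, hz1, Complex.ofReal_zero]
    have htr2 : (A i2 * B j).trace = 0 := by
      rw [← hfact i2 j, hz2, Complex.ofReal_zero]
    have hAB1 : A i1 * B j = 0 := psd_mul_eq_zero (hApsd i1) (hBpsd j) htr1
    have hAB2 : A i2 * B j = 0 := psd_mul_eq_zero (hApsd i2) (hBpsd j) htr2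
    obtain ⟨u, hu⟩ : ∃ u, B j *ᵥ u ≠ 0 := by
      by_contra hall
      push_neg at hall
      apply hBj
      ext a b
      have := congrFun (hall (Pi.single b 1)) a
      simpa [Matrix.mulVec_single] using this
    have hv1 : A i1 *ᵥ (B j *ᵥ u) = 0 := by
      rw [Matrix.mulVec_mulVec, hAB1, Matrix.zero_mulVec]
    have hv2 : A i2 *ᵥ (B j *ᵥ u) = 0 := by
      rw [Matrix.mulVec_mulVec, hAB2, Matrix.zero_mulVec]
    obtain ⟨c, hc⟩ := herm_ratio (hApsd i1).1 (hApsd i2).1 (hAne i1) hu hv1 hv2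
    have hrow : ∀ j', C i2 j' = c * C i1 j' := by
      intro j'
      have h1 := hfact i1 j'
      have h2 := hfact i2 j'
      rw [hc, Matrix.smul_mul, Matrix.trace_smul, ← h1, smul_eq_mul] at h2
      exact_mod_cast h2
    have hc1 : c = 1 := by
      have h2 := hC.2 i2
      rw [Finset.sum_congr rfl (fun j' _ => hrow j'), ← Finset.mul_sum, hC.2 i1, mul_one] at h2
      exact h2
    exact hrows i1 i2 hne (funext fun j' => by rw [hrow j', hc1, one_mul]).symm
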